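/- Let H = S⁻ᵀDS⁻¹ be a Hamiltonian matrix with symplectic diagonalization (S symplectic, D = diag(d₁,d₁,…,d_m,d_m), all d_i > 0, d_max the largest d_i) and let V := (1/2)·S·diag(coth d₁, coth d₁,…, coth d_m, coth d_m)·Sᵀ be its covariance matrix. Then the complex matrix 2iΩV − I is invertible, and for every real t ≥ 0 the matrix (t/(t+1))·(2iΩV + I)(2iΩV − I)⁻¹ + (1/(t+1))·I is invertible with smallest singular value at least e^{−2 d_max}/‖S‖∞². -/

import Mathlib

open Matrix
open scoped Matrix.Norms.L2Operator

/-- The spectral norm (ℓ²→ℓ² operator norm, largest singular value) of a matrix. -/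
noncomputable def spNorm {𝕜 : Type*} [RCLike 𝕜] {p q : Type*} [Fintype p] [Fintype q]
    [DecidableEq q] (A : Matrix p q 𝕜) : ℝ :=
  ‖LinearMap.toContinuousLinearMap (Matrix.toEuclideanLin A)‖

/-- Index set for `2m × 2m` matrices: the pair `(i, δ)` stands for the index `2i - δ`,
`(i, 0)` being the first index of the `i`-th pair and `(i, 1)` the second. -/
abbrev Idx (m : ℕ) := Fin m × Fin 2

/-- The standard symplectic form: block diagonal with `m` blocks `[[0,1],[-1,0]]`. -/
def Omega (m : ℕ) : Matrix (Idx m) (Idx m) ℝ :=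
  Matrix.of fun p q =>
    if p.1 = q.1 ∧ p.2 = 0 ∧ q.2 = 1 then 1
    else if p.1 = q.1 ∧ p.2 = 1 ∧ q.2 = 0 then -1 else 0

/-- The diagonal matrix `diag (d₁, d₁, …, d_m, d_m)`. -/
def pairDiag {m : ℕ} (d : Fin m → ℝ) : Matrix (Idx m) (Idx m) ℝ :=
  Matrix.diagonal fun p => d p.1

/-- Hyperbolic cotangent. -/
noncomputable def rcoth (x : ℝ) : ℝ := Real.cosh x / Real.sinh x

/-- A real matrix regarded as a complex matrix. -/
def cplx {p q : Type*} (A : Matrix p q ℝ) : Matrix p q ℂ :=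
  A.map (fun x => (x : ℂ))

/-! ### Auxiliary lemmas -/

section Aux

set_option linter.unusedSectionVars false

lemma spNorm_eq {n : Type*} [Fintype n] [DecidableEq n] {𝕜 : Type*} [RCLike 𝕜]
    (A : Matrix n n 𝕜) : spNorm A = ‖A‖ := rfl

lemma omega_mul_omega (m : ℕ) : Omega m * Omega m = -1 := by
  ext ⟨p1, p2⟩ ⟨q1, q2⟩
  simp [Omega, Matrix.mul_apply, Fintype.sum_prod_type, Fin.sum_univ_two, Matrix.one_apply,
    Prod.ext_iff]
  fin_cases p2 <;> fin_cases q2 <;>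
    simp [Finset.sum_ite_eq, Finset.sum_ite_eq', eq_comm] <;> split <;> simp

lemma omega_transpose (m : ℕ) : (Omega m)ᵀ = -(Omega m) := by
  ext ⟨p1, p2⟩ ⟨q1, q2⟩
  fin_cases p2 <;> fin_cases q2 <;> simp [Omega, Matrix.transpose_apply, and_comm, eq_comm] <;>
    split <;> simp

lemma pairDiag_comm_omega {m : ℕ} (f : Fin m → ℝ) :
    pairDiag f * Omega m = Omega m * pairDiag f := by
  ext ⟨p1, p2⟩ ⟨q1, q2⟩
  simp [pairDiag, Omega, Matrix.diagonal_mul, Matrix.mul_diagonal]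
  fin_cases p2 <;> fin_cases q2 <;> simp <;> split <;> simp_all

lemma pairDiag_mul {m : ℕ} (f g : Fin m → ℝ) :
    pairDiag f * pairDiag g = pairDiag (fun i => f i * g i) :=
  Matrix.diagonal_mul_diagonal _ _

lemma pairDiag_one {m : ℕ} : pairDiag (fun _ : Fin m => (1 : ℝ)) = 1 :=
  Matrix.diagonal_one

/-! cplx is a ring homomorphism -/

lemma cplx_mul {n : Type*} [Fintype n] (A B : Matrix n n ℝ) :
    cplx (A * B) = cplx A * cplx B := by
  ext p q
  simp [cplx, Matrix.mul_apply]

lemma cplx_one {n : Type*} [Fintype n] [DecidableEq n] :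
    cplx (1 : Matrix n n ℝ) = 1 := by
  ext p q
  by_cases h : p = q <;> simp [cplx, Matrix.one_apply, h]

lemma cplx_neg {n : Type*} (A : Matrix n n ℝ) : cplx (-A) = -cplx A := by
  ext p q; simp [cplx]

lemma cplx_sub {n : Type*} (A B : Matrix n n ℝ) : cplx (A - B) = cplx A - cplx B := by
  ext p q; simp [cplx]

lemma cplx_add {n : Type*} (A B : Matrix n n ℝ) : cplx (A + B) = cplx A + cplx B := by
  ext p q; simp [cplx]

lemma cplx_smul {n : Type*} (r : ℝ) (A : Matrix n n ℝ) :
    cplx (r • A) = (r : ℂ) • cplx A := by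
  ext p q; simp [cplx]

/-! Euclidean norms and mulVec -/

lemma euclidean_norm_sq {n : Type*} [Fintype n] (y : EuclideanSpace ℝ n) :
    ‖y‖ ^ 2 = ∑ i, (y i) ^ 2 := by
  rw [EuclideanSpace.norm_eq, Real.sq_sqrt (by positivity)]
  simp [Real.norm_eq_abs, sq_abs]

lemma euclidean_norm_sq_c {n : Type*} [Fintype n] (y : EuclideanSpace ℂ n) :
    ‖y‖ ^ 2 = ∑ i, ((y i).re ^ 2 + (y i).im ^ 2) := by
  rw [EuclideanSpace.norm_eq, Real.sq_sqrt (by positivity)]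
  congr 1; ext i
  rw [Complex.sq_norm, Complex.normSq_apply]; ring

lemma euclidean_norm_sq_c' {n : Type*} [Fintype n] (y : EuclideanSpace ℂ n) :
    ‖y‖ ^ 2 = ∑ i, Complex.normSq (y i) := by
  rw [EuclideanSpace.norm_eq, Real.sq_sqrt (by positivity)]
  congr 1; ext i
  rw [Complex.sq_norm]

lemma cplx_mulVec_re {n : Type*} [Fintype n] (A : Matrix n n ℝ) (x : n → ℂ) (i : n) :
    ((cplx A).mulVec x i).re = A.mulVec (fun j => (x j).re) i := by
  simp [cplx, Matrix.mulVec, dotProduct, Complex.re_sum]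

lemma cplx_mulVec_im {n : Type*} [Fintype n] (A : Matrix n n ℝ) (x : n → ℂ) (i : n) :
    ((cplx A).mulVec x i).im = A.mulVec (fun j => (x j).im) i := by
  simp [cplx, Matrix.mulVec, dotProduct, Complex.im_sum]

lemma cplx_opNorm_le {n : Type*} [Fintype n] [DecidableEq n] (A : Matrix n n ℝ) :
    ‖cplx A‖ ≤ ‖A‖ := by
  rw [Matrix.l2_opNorm_def]
  apply ContinuousLinearMap.opNorm_le_bound _ (norm_nonneg A)
  intro x
  set xr : EuclideanSpace ℝ n := WithLp.toLp 2 (fun j => (x j).re) with hxr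
  set xi : EuclideanSpace ℝ n := WithLp.toLp 2 (fun j => (x j).im) with hxi
  have h1 : ‖Matrix.toEuclideanLin (cplx A) x‖ ^ 2
      = ‖Matrix.toEuclideanLin A xr‖ ^ 2 + ‖Matrix.toEuclideanLin A xi‖ ^ 2 := by
    rw [euclidean_norm_sq_c, euclidean_norm_sq, euclidean_norm_sq, ← Finset.sum_add_distrib]
    refine Finset.sum_congr rfl fun i _ => ?_
    have hre : (Matrix.toEuclideanLin (cplx A) x i).re = Matrix.toEuclideanLin A xr i :=
      cplx_mulVec_re A x i
    have him : (Matrix.toEuclideanLin (cplx A) x i).im = Matrix.toEuclideanLin A xi i :=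
      cplx_mulVec_im A x i
    rw [hre, him]
  have h2 : ‖x‖ ^ 2 = ‖xr‖ ^ 2 + ‖xi‖ ^ 2 := by
    rw [euclidean_norm_sq_c, euclidean_norm_sq, euclidean_norm_sq, ← Finset.sum_add_distrib]
  have hr := Matrix.l2_opNorm_mulVec A xr
  have hi := Matrix.l2_opNorm_mulVec A xi
  have hb : ‖Matrix.toEuclideanLin (cplx A) x‖ ^ 2 ≤ (‖A‖ * ‖x‖) ^ 2 := by
    rw [h1]
    have : (‖A‖ * ‖x‖) ^ 2 = (‖A‖ * ‖xr‖)^2 + (‖A‖*‖xi‖)^2 := by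
      rw [mul_pow, h2]; ring
    rw [this]
    gcongr <;> first | exact hr | exact hi
  exact (pow_le_pow_iff_left₀ (norm_nonneg _) (by positivity) (by norm_num)).mp hb

lemma cOmega_mulVec {m : ℕ} (z : Idx m → ℂ) (p : Idx m) :
    (cplx (Omega m)).mulVec z p = if p.2 = 0 then z (p.1, 1) else -z (p.1, 0) := by
  obtain ⟨j, δ⟩ := p
  rw [Matrix.mulVec, dotProduct, Fintype.sum_prod_type]
  simp only [Fin.sum_univ_two]
  fin_cases δ <;>
    · simp only [cplx, Omega, Matrix.map_apply, Matrix.of_apply]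
      norm_num
      rw [Finset.sum_eq_single j (fun b _ hb => by simp [Ne.symm hb]) (by simp)]
      simp

lemma pair_ineq (c s e : ℝ) (hs : 0 ≤ s) (hcs : e ≤ c - s) (a b : ℂ) :
    e * (Complex.normSq a + Complex.normSq b) ≤
      ((starRingEnd ℂ) a * (↑c * a + ↑s * (Complex.I * b))).re +
      ((starRingEnd ℂ) b * (↑c * b + ↑s * (Complex.I * -a))).re := by
  simp only [Complex.mul_re, Complex.add_re, Complex.add_im, Complex.mul_im, Complex.conj_re,
    Complex.conj_im, Complex.I_re, Complex.I_im, Complex.ofReal_re, Complex.ofReal_im,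
    Complex.neg_re, Complex.neg_im, Complex.normSq_apply]
  nlinarith [sq_nonneg (a.re - b.im), sq_nonneg (a.im + b.re), Complex.normSq_nonneg a,
    Complex.normSq_nonneg b, mul_nonneg hs (sq_nonneg (a.re - b.im)),
    mul_nonneg hs (sq_nonneg (a.im + b.re))]

lemma cplx_pairDiag {m : ℕ} (f : Fin m → ℝ) :
    cplx (pairDiag f) = Matrix.diagonal (fun p : Idx m => (f p.1 : ℂ)) := by
  ext p q
  by_cases h : p = q <;> simp [cplx, pairDiag, Matrix.diagonal, h]

/-- The matrix `(2iΩV+1)(2iΩV-1)⁻¹` in the symplectically diagonal frame. -/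
noncomputable def Fmat {m : ℕ} (d : Fin m → ℝ) : Matrix (Idx m) (Idx m) ℂ :=
  cplx (pairDiag fun i => Real.cosh (2 * d i)) +
    Complex.I • (cplx (Omega m) * cplx (pairDiag fun i => Real.sinh (2 * d i)))

lemma Fmat_mulVec {m : ℕ} (d : Fin m → ℝ) (z : EuclideanSpace ℂ (Idx m)) (p : Idx m) :
    (Matrix.toEuclideanLin (Fmat d) z) p =
      (Real.cosh (2 * d p.1) : ℂ) * z p +
        (Real.sinh (2 * d p.1) : ℂ) *
          (Complex.I * (if p.2 = 0 then z (p.1, 1) else -z (p.1, 0))) := by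
  show (Fmat d).mulVec z p = _
  rw [Fmat, Matrix.add_mulVec, Matrix.smul_mulVec, ← Matrix.mulVec_mulVec,
    cplx_pairDiag, cplx_pairDiag]
  have h2 : (Matrix.diagonal fun p : Idx m => (Real.sinh (2 * d p.1) : ℂ)).mulVec z =
      fun q => (Real.sinh (2 * d q.1) : ℂ) * z q := by
    funext q; exact Matrix.mulVec_diagonal _ _ _
  rw [Pi.add_apply, Matrix.mulVec_diagonal, h2, Pi.smul_apply, cOmega_mulVec]
  obtain ⟨j, δ⟩ := p
  fin_cases δ <;> simp <;> ring

lemma quad_bound {m : ℕ} (d : Fin m → ℝ) (hd : ∀ i, 0 < d i) (dmax : ℝ)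
    (hle : ∀ i, d i ≤ dmax) (z : EuclideanSpace ℂ (Idx m)) :
    Real.exp (-2 * dmax) * ‖z‖ ^ 2 ≤
      (inner ℂ z (Matrix.toEuclideanLin (Fmat d) z) : ℂ).re := by
  have hnorm : ‖z‖ ^ 2 = ∑ j : Fin m,
      (Complex.normSq (z (j, 0)) + Complex.normSq (z (j, 1))) := by
    rw [euclidean_norm_sq_c', Fintype.sum_prod_type]
    simp [Fin.sum_univ_two]
  have hinner : (inner ℂ z (Matrix.toEuclideanLin (Fmat d) z) : ℂ).re =
      ∑ j : Fin m,
        (((starRingEnd ℂ) (z (j, 0)) * (Matrix.toEuclideanLin (Fmat d) z (j, 0))).re +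
         ((starRingEnd ℂ) (z (j, 1)) * (Matrix.toEuclideanLin (Fmat d) z (j, 1))).re) := by
    rw [PiLp.inner_apply]
    simp only [RCLike.inner_apply, Complex.re_sum]
    rw [Fintype.sum_prod_type]
    simp [Fin.sum_univ_two]
    exact Finset.sum_congr rfl fun _ _ => by ring
  rw [hnorm, hinner, Finset.mul_sum]
  apply Finset.sum_le_sum
  intro j _
  rw [Fmat_mulVec, Fmat_mulVec]
  simp only [if_pos rfl, if_neg (by decide : ¬ (1 : Fin 2) = 0)]
  exact pair_ineq _ _ _ (Real.sinh_nonneg_iff.mpr (by nlinarith [hd j]))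
    (by rw [Real.cosh_sub_sinh]
        apply Real.exp_le_exp.mpr
        nlinarith [hle j, hd j]) _ _

lemma toEL_mul_apply {n : Type*} [Fintype n] [DecidableEq n] (A B : Matrix n n ℂ)
    (x : EuclideanSpace ℂ n) :
    Matrix.toEuclideanLin (A * B) x = Matrix.toEuclideanLin A (Matrix.toEuclideanLin B x) := by
  ext i
  show (A * B).mulVec _ i = A.mulVec (B.mulVec _) i
  rw [← Matrix.mulVec_mulVec]

lemma toEL_one_apply {n : Type*} [Fintype n] [DecidableEq n] (x : EuclideanSpace ℂ n) :
    Matrix.toEuclideanLin (1 : Matrix n n ℂ) x = x := by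
  ext i
  show (1 : Matrix n n ℂ).mulVec _ i = x i
  rw [Matrix.one_mulVec]; rfl

lemma abstract_main {n : Type*} [Fintype n] [DecidableEq n]
    (w c e dc ds p q : Matrix n n ℂ)
    (hww : w * w = -1) (hcw : c * w = w * c)
    (hqp : q * p = 1) (hpq : p * q = 1)
    (h1 : (c * c - 1) * e = 1)
    (hdc : (c * c + 1) * e = dc)
    (hds : c * e + c * e = ds) :
    (q * (Complex.I • (w * c)) * p - 1) * (q * ((Complex.I • (w * c) + 1) * e) * p) = 1 ∧
    (q * (Complex.I • (w * c)) * p + 1) * (q * ((Complex.I • (w * c) + 1) * e) * p)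
      = q * (dc + Complex.I • (w * ds)) * p := by
  set N := Complex.I • (w * c) with hN
  have hNN : N * N = c * c := by
    rw [hN, smul_mul_assoc, mul_smul_comm, smul_smul, Complex.I_mul_I]
    have h2 : w * c * (w * c) = -(c * c) := by
      rw [mul_assoc w c (w * c), ← mul_assoc c w c, hcw, mul_assoc w c c,
        ← mul_assoc w w (c * c), hww, neg_one_mul]
    rw [h2, neg_smul, one_smul, neg_neg]
  have sandwich : ∀ X Y : Matrix n n ℂ, (q * X * p) * (q * Y * p) = q * (X * Y) * p := by
    intro X Y
    calc (q * X * p) * (q * Y * p) = q * (X * ((p * q) * (Y * p))) := by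
          simp only [mul_assoc]
      _ = q * (X * Y) * p := by rw [hpq, one_mul]; simp only [mul_assoc]
  have hm1 : q * N * p - 1 = q * (N - 1) * p := by
    rw [mul_sub, sub_mul, mul_one, hqp]
  have hp1 : q * N * p + 1 = q * (N + 1) * p := by
    rw [mul_add, add_mul, mul_one, hqp]
  constructor
  · rw [hm1, sandwich]
    have : (N - 1) * ((N + 1) * e) = (N * N - 1) * e := by noncomm_ring
    rw [this, hNN, h1, mul_one, hqp]
  · rw [hp1, sandwich]
    have key : (N + 1) * ((N + 1) * e) = (N * N + 1) * e + (N * e + N * e) := by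
      noncomm_ring
    have hNe : N * e = Complex.I • (w * (c * e)) := by
      rw [hN, smul_mul_assoc, mul_assoc]
    rw [key, hNN, hdc, hNe, ← smul_add, ← mul_add, hds]

lemma quad_to_norm {n : Type*} [Fintype n] [DecidableEq n] (M : Matrix n n ℂ) (e : ℝ)
    (h : ∀ z : EuclideanSpace ℂ n, e * ‖z‖ ^ 2 ≤ (inner ℂ z (Matrix.toEuclideanLin M z) : ℂ).re) :
    ∀ z : EuclideanSpace ℂ n, e * ‖z‖ ≤ ‖Matrix.toEuclideanLin M z‖ := by
  intro z
  rcases eq_or_ne z 0 with rfl | hz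
  · simp
  · have h1 := h z
    have h2 : (inner ℂ z (Matrix.toEuclideanLin M z) : ℂ).re
        ≤ ‖z‖ * ‖Matrix.toEuclideanLin M z‖ :=
      le_trans (Complex.re_le_norm _)
        (by exact norm_inner_le_norm _ _)
    have hzpos : 0 < ‖z‖ := norm_pos_iff.mpr hz
    have h3 : ‖z‖ * (e * ‖z‖) ≤ ‖z‖ * ‖Matrix.toEuclideanLin M z‖ := by nlinarith
    exact le_of_mul_le_mul_left h3 hzpos

lemma sandwich_norm {n : Type*} [Fintype n] [DecidableEq n]
    (Gm G' P Q : Matrix n n ℂ) (s e : ℝ)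
    (hfac : Gm = Q * G' * P)
    (hQP : Q * P = 1) (hPQ : P * Q = 1)
    (hPn : ‖P‖ ≤ s) (hQn : ‖Q‖ ≤ s) (hs : 0 < s) (he : 0 < e)
    (hG' : ∀ z : EuclideanSpace ℂ n, e * ‖z‖ ≤ ‖Matrix.toEuclideanLin G' z‖) :
    ∀ x : EuclideanSpace ℂ n, (e / s ^ 2) * ‖x‖ ≤ ‖Matrix.toEuclideanLin Gm x‖ := by
  intro x
  set y := Matrix.toEuclideanLin P x with hy
  set w := Matrix.toEuclideanLin G' y with hw
  have hGx : Matrix.toEuclideanLin Gm x = Matrix.toEuclideanLin Q w := by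
    rw [hfac, toEL_mul_apply, toEL_mul_apply]
  have h2 : ‖x‖ ≤ s * ‖y‖ := by
    have hxy : x = Matrix.toEuclideanLin Q y := by
      rw [hy, ← toEL_mul_apply, hQP, toEL_one_apply]
    calc ‖x‖ = ‖Matrix.toEuclideanLin Q y‖ := by rw [← hxy]
      _ ≤ ‖Q‖ * ‖y‖ := (Matrix.toEuclideanLin.trans LinearMap.toContinuousLinearMap Q).le_opNorm y
      _ ≤ s * ‖y‖ := by gcongr
  have h1 : e * ‖y‖ ≤ ‖w‖ := hG' y
  have h3 : ‖w‖ ≤ s * ‖Matrix.toEuclideanLin Gm x‖ := by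
    have hwx : w = Matrix.toEuclideanLin P (Matrix.toEuclideanLin Gm x) := by
      rw [hGx, ← toEL_mul_apply, hPQ]
      rw [hw, hy, ← toEL_mul_apply, ← toEL_mul_apply, one_mul]
    calc ‖w‖ = ‖Matrix.toEuclideanLin P (Matrix.toEuclideanLin Gm x)‖ := by rw [← hwx]
      _ ≤ ‖P‖ * ‖Matrix.toEuclideanLin Gm x‖ :=
          (Matrix.toEuclideanLin.trans LinearMap.toContinuousLinearMap P).le_opNorm _
      _ ≤ s * ‖Matrix.toEuclideanLin Gm x‖ := by gcongr
  rw [div_mul_eq_mul_div, div_le_iff₀ (by positivity)]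
  nlinarith [norm_nonneg (Matrix.toEuclideanLin Gm x), norm_nonneg x, norm_nonneg y,
    mul_le_mul_of_nonneg_left h2 he.le, mul_le_mul_of_nonneg_left h1 hs.le,
    mul_le_mul_of_nonneg_left h3 hs.le]

lemma isUnit_of_lower_bound {n : Type*} [Fintype n] [DecidableEq n] (M : Matrix n n ℂ)
    (c : ℝ) (hc : 0 < c)
    (h : ∀ x : EuclideanSpace ℂ n, c * ‖x‖ ≤ ‖Matrix.toEuclideanLin M x‖) :
    IsUnit M := by
  rw [Matrix.isUnit_iff_isUnit_det, isUnit_iff_ne_zero]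
  intro hdet
  obtain ⟨v, hv0, hv⟩ := Matrix.exists_mulVec_eq_zero_iff.mpr hdet
  set x : EuclideanSpace ℂ n := WithLp.toLp 2 v with hx
  have hMx : Matrix.toEuclideanLin M x = 0 := by
    rw [Matrix.toEuclideanLin_apply, hx]; simp [hv]
  have hxz : x = 0 := by
    have hb := h x
    rw [hMx, norm_zero] at hb
    have : ‖x‖ = 0 := le_antisymm (by nlinarith) (norm_nonneg x)
    exact norm_eq_zero.mp this
  apply hv0
  have hv' : v = WithLp.ofLp x := rfl
  rw [hv', hxz]; rfl

lemma entry1 (x : ℝ) (hs : Real.sinh x ≠ 0) :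
    (rcoth x * rcoth x - 1) * Real.sinh x ^ 2 = 1 := by
  have hc := Real.cosh_sq_sub_sinh_sq x
  simp only [rcoth]
  field_simp
  ring_nf
  ring_nf at hc
  nlinarith [hc]

lemma entry2 (x : ℝ) (hs : Real.sinh x ≠ 0) :
    (rcoth x * rcoth x + 1) * Real.sinh x ^ 2 = Real.cosh (2 * x) := by
  have hc := Real.cosh_sq_sub_sinh_sq x
  have h2 := Real.cosh_two_mul x
  simp only [rcoth]
  field_simp
  nlinarith [hc, h2]

lemma entry3 (x : ℝ) (hs : Real.sinh x ≠ 0) :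
    rcoth x * Real.sinh x ^ 2 + rcoth x * Real.sinh x ^ 2 = Real.sinh (2 * x) := by
  have h2 := Real.sinh_two_mul x
  simp only [rcoth]
  field_simp
  rw [h2]; ring

end Aux

set_option maxHeartbeats 2000000

/-- For a Gaussian Hamiltonian with covariance matrix `V`, the matrix
`2iΩV - I` is invertible, and for every `t ≥ 0` the matrix
`(t/(t+1))·(2iΩV + I)(2iΩV - I)⁻¹ + (1/(t+1))·I` is invertible with smallest singular
value at least `e^{-2 d_max}/‖S‖∞²`. -/
theorem statement2 {m : ℕ} (hm : 0 < m)
    (S : Matrix (Idx m) (Idx m) ℝ) (hS : S * Omega m * Sᵀ = Omega m)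
    (d : Fin m → ℝ) (hd : ∀ i, 0 < d i)
    (dmax : ℝ) (hdmax_le : ∀ i, d i ≤ dmax) (hdmax_mem : ∃ i, d i = dmax)
    (H : Matrix (Idx m) (Idx m) ℝ) (hH : H = (S⁻¹)ᵀ * pairDiag d * S⁻¹)
    (V : Matrix (Idx m) (Idx m) ℝ)
    (hV : V = (1/2 : ℝ) • (S * pairDiag (fun i => rcoth (d i)) * Sᵀ))
    (B : Matrix (Idx m) (Idx m) ℂ)
    (hB : B = (2 * Complex.I) • (cplx (Omega m) * cplx V)) :
    IsUnit (B - 1) ∧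
    ∀ t : ℝ, 0 ≤ t →
      IsUnit (((t/(t+1) : ℝ) : ℂ) • ((B + 1) * (B - 1)⁻¹) + ((1/(t+1) : ℝ) : ℂ) • 1) ∧
      ∀ x : EuclideanSpace ℂ (Idx m),
        (Real.exp (-2 * dmax) / spNorm S ^ 2) * ‖x‖ ≤
          ‖Matrix.toEuclideanLin
            (((t/(t+1) : ℝ) : ℂ) • ((B + 1) * (B - 1)⁻¹) + ((1/(t+1) : ℝ) : ℂ) • 1) x‖ := by
  classical
  haveI : Nonempty (Idx m) := ⟨(⟨0, hm⟩, 0)⟩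
  -- real symplectic algebra
  have hQW : -(Omega m * S * Omega m) * Omega m = Omega m * S := by
    rw [neg_mul, mul_assoc, omega_mul_omega, mul_neg_one, neg_neg]
  have hQP : -(Omega m * S * Omega m) * Sᵀ = 1 := by
    have h1 : Omega m * S * Omega m * Sᵀ = Omega m * (S * Omega m * Sᵀ) := by
      simp only [mul_assoc]
    rw [neg_mul, h1, hS, omega_mul_omega, neg_neg]
  have hPQ : Sᵀ * -(Omega m * S * Omega m) = 1 := mul_eq_one_comm.mp hQP
  -- complexified facts
  have hww : cplx (Omega m) * cplx (Omega m) = (-1 : Matrix (Idx m) (Idx m) ℂ) := by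
    rw [← cplx_mul, omega_mul_omega, cplx_neg, cplx_one]
  have hcw : cplx (pairDiag fun i => rcoth (d i)) * cplx (Omega m)
      = cplx (Omega m) * cplx (pairDiag fun i => rcoth (d i)) := by
    rw [← cplx_mul, pairDiag_comm_omega, cplx_mul]
  have hqpc : cplx (-(Omega m * S * Omega m)) * cplx Sᵀ = 1 := by
    rw [← cplx_mul, hQP, cplx_one]
  have hpqc : cplx Sᵀ * cplx (-(Omega m * S * Omega m)) = 1 := by
    rw [← cplx_mul, hPQ, cplx_one]
  -- diagonal identities (real)
  have hsinh : ∀ i, Real.sinh (d i) ≠ 0 := fun i =>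
    ne_of_gt (by rw [← Real.sinh_zero]; exact Real.sinh_lt_sinh.mpr (hd i))
  have h1r : (pairDiag (fun i => rcoth (d i)) * pairDiag (fun i => rcoth (d i)) - 1)
      * pairDiag (fun i => Real.sinh (d i) ^ 2) = 1 := by
    rw [pairDiag_mul,
      show (1 : Matrix (Idx m) (Idx m) ℝ) = Matrix.diagonal (fun _ => 1) from
        Matrix.diagonal_one.symm]
    unfold pairDiag
    rw [Matrix.diagonal_sub, Matrix.diagonal_mul_diagonal]
    ext p q
    by_cases h : p = q
    · subst h
      have := entry1 (d p.1) (hsinh p.1)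
      simpa using this
    · simp [Matrix.diagonal_apply_ne _ h]
  have hdcr : (pairDiag (fun i => rcoth (d i)) * pairDiag (fun i => rcoth (d i)) + 1)
      * pairDiag (fun i => Real.sinh (d i) ^ 2)
      = pairDiag (fun i => Real.cosh (2 * d i)) := by
    rw [pairDiag_mul,
      show (1 : Matrix (Idx m) (Idx m) ℝ) = Matrix.diagonal (fun _ => 1) from
        Matrix.diagonal_one.symm]
    unfold pairDiag
    rw [Matrix.diagonal_add, Matrix.diagonal_mul_diagonal]
    ext p q
    by_cases h : p = q
    · subst h
      have := entry2 (d p.1) (hsinh p.1)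
      simpa using this
    · simp [Matrix.diagonal_apply_ne _ h]
  have hdsr : pairDiag (fun i => rcoth (d i)) * pairDiag (fun i => Real.sinh (d i) ^ 2)
      + pairDiag (fun i => rcoth (d i)) * pairDiag (fun i => Real.sinh (d i) ^ 2)
      = pairDiag (fun i => Real.sinh (2 * d i)) := by
    rw [pairDiag_mul]
    unfold pairDiag
    rw [Matrix.diagonal_add]
    ext p q
    by_cases h : p = q
    · subst h
      have := entry3 (d p.1) (hsinh p.1)
      simpa using this
    · simp [Matrix.diagonal_apply_ne _ h]
  -- complexified diagonal identities
  have h1c : (cplx (pairDiag fun i => rcoth (d i)) * cplx (pairDiag fun i => rcoth (d i)) - 1)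
      * cplx (pairDiag fun i => Real.sinh (d i) ^ 2) = 1 := by
    rw [← cplx_mul, ← cplx_one (n := Idx m), ← cplx_sub, ← cplx_mul, h1r]
  have hdcc : (cplx (pairDiag fun i => rcoth (d i)) * cplx (pairDiag fun i => rcoth (d i)) + 1)
      * cplx (pairDiag fun i => Real.sinh (d i) ^ 2)
      = cplx (pairDiag fun i => Real.cosh (2 * d i)) := by
    rw [← cplx_mul, ← cplx_one (n := Idx m), ← cplx_add, ← cplx_mul, hdcr]
  have hdsc : cplx (pairDiag fun i => rcoth (d i)) * cplx (pairDiag fun i => Real.sinh (d i) ^ 2)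
      + cplx (pairDiag fun i => rcoth (d i)) * cplx (pairDiag fun i => Real.sinh (d i) ^ 2)
      = cplx (pairDiag fun i => Real.sinh (2 * d i)) := by
    rw [← cplx_mul, ← cplx_add, hdsr]
  -- B in factored form
  have hB2 : B = cplx (-(Omega m * S * Omega m))
      * (Complex.I • (cplx (Omega m) * cplx (pairDiag fun i => rcoth (d i)))) * cplx Sᵀ := by
    rw [hB, hV, cplx_smul, cplx_mul, cplx_mul, mul_smul_comm, smul_smul]
    have hco : (2 * Complex.I) * ((1/2 : ℝ) : ℂ) = Complex.I := by push_cast; ring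
    rw [hco, mul_smul_comm, smul_mul_assoc]
    congr 1
    have hqw : cplx (-(Omega m * S * Omega m)) * cplx (Omega m) = cplx (Omega m) * cplx S := by
      rw [← cplx_mul, hQW, cplx_mul]
    rw [← mul_assoc (cplx (-(Omega m * S * Omega m))), hqw]
    simp only [mul_assoc]
  obtain ⟨hunit1, hM⟩ := abstract_main (cplx (Omega m))
    (cplx (pairDiag fun i => rcoth (d i)))
    (cplx (pairDiag fun i => Real.sinh (d i) ^ 2))
    (cplx (pairDiag fun i => Real.cosh (2 * d i)))
    (cplx (pairDiag fun i => Real.sinh (2 * d i)))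
    (cplx Sᵀ) (cplx (-(Omega m * S * Omega m))) hww hcw hqpc hpqc h1c hdcc hdsc
  rw [← hB2] at hunit1 hM
  have hBu : IsUnit (B - 1) := by
    have hdet := congrArg Matrix.det hunit1
    rw [Matrix.det_mul, Matrix.det_one] at hdet
    exact (Matrix.isUnit_iff_isUnit_det _).mpr (IsUnit.of_mul_eq_one _ hdet)
  have hinv : (B - 1)⁻¹ = cplx (-(Omega m * S * Omega m))
      * ((Complex.I • (cplx (Omega m) * cplx (pairDiag fun i => rcoth (d i))) + 1)
        * cplx (pairDiag fun i => Real.sinh (d i) ^ 2)) * cplx Sᵀ :=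
    Matrix.inv_eq_right_inv hunit1
  have hMfull : (B + 1) * (B - 1)⁻¹
      = cplx (-(Omega m * S * Omega m)) * Fmat d * cplx Sᵀ := by
    rw [hinv]; exact hM
  -- norm facts
  have hone : ‖(1 : Matrix (Idx m) (Idx m) ℝ)‖ = 1 := by
    rw [Matrix.l2_opNorm_def]
    have hTx : ∀ x : EuclideanSpace ℝ (Idx m),
        (Matrix.toEuclideanLin (1 : Matrix (Idx m) (Idx m) ℝ)) x = x := by
      intro x; ext i
      show (1 : Matrix (Idx m) (Idx m) ℝ).mulVec _ i = x i
      rw [Matrix.one_mulVec]; rfl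
    apply le_antisymm
    · exact ContinuousLinearMap.opNorm_le_bound _ zero_le_one
        (fun x => by rw [LinearEquiv.trans_apply]; erw [hTx x]; rw [one_mul])
    · have hx0 : ‖EuclideanSpace.single ((⟨0, hm⟩, 0) : Idx m) (1:ℝ)‖ = 1 := by
        rw [EuclideanSpace.norm_single, norm_one]
      have := ContinuousLinearMap.le_opNorm
        ((Matrix.toEuclideanLin.trans LinearMap.toContinuousLinearMap)
          (1 : Matrix (Idx m) (Idx m) ℝ))
        (EuclideanSpace.single ((⟨0, hm⟩, 0) : Idx m) (1:ℝ))
      rw [hx0, mul_one] at this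
      calc (1:ℝ) = ‖EuclideanSpace.single ((⟨0, hm⟩, 0) : Idx m) (1:ℝ)‖ := hx0.symm
        _ ≤ _ := by
            refine le_trans (le_of_eq ?_) this
            rw [LinearEquiv.trans_apply]; erw [hTx _]
  have hctO : (Omega m)ᴴ = -(Omega m) := by
    have h1 : (Omega m)ᴴ = (Omega m)ᵀ := by ext i j; simp [Matrix.conjTranspose_apply]
    rw [h1, omega_transpose]
  have hOn : ‖Omega m‖ = 1 := by
    have hsq : ‖Omega m‖ * ‖Omega m‖ = 1 := by
      rw [← Matrix.l2_opNorm_conjTranspose_mul_self, hctO, neg_mul, omega_mul_omega,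
        neg_neg, hone]
    rcases mul_self_eq_one_iff.mp hsq with h | h
    · exact h
    · linarith [norm_nonneg (Omega m)]
  have hQn : ‖-(Omega m * S * Omega m)‖ ≤ ‖S‖ := by
    calc ‖-(Omega m * S * Omega m)‖ = ‖Omega m * S * Omega m‖ := norm_neg _
      _ ≤ ‖Omega m * S‖ * ‖Omega m‖ := Matrix.l2_opNorm_mul _ _
      _ ≤ (‖Omega m‖ * ‖S‖) * ‖Omega m‖ := by
          have := Matrix.l2_opNorm_mul (Omega m) S
          gcongr
      _ = ‖S‖ := by rw [hOn]; ring
  have hSTn : ‖Sᵀ‖ = ‖S‖ := by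
    have h1 : Sᴴ = Sᵀ := by ext i j; simp [Matrix.conjTranspose_apply]
    rw [← h1, Matrix.l2_opNorm_conjTranspose]
  have hcPn : ‖cplx Sᵀ‖ ≤ ‖S‖ := le_trans (cplx_opNorm_le _) (le_of_eq hSTn)
  have hcQn : ‖cplx (-(Omega m * S * Omega m))‖ ≤ ‖S‖ := le_trans (cplx_opNorm_le _) hQn
  have hSne : S ≠ 0 := by
    intro h0
    have h1 := congrArg (fun M => M ((⟨0, hm⟩, 0) : Idx m) ((⟨0, hm⟩, 0) : Idx m)) hPQ
    rw [h0] at h1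
    simp [Matrix.one_apply] at h1
  have hSpos : 0 < ‖S‖ := norm_pos_iff.mpr hSne
  have he : (0:ℝ) < Real.exp (-2 * dmax) := Real.exp_pos _
  have hdm : 0 < dmax := by obtain ⟨i, hi⟩ := hdmax_mem; rw [← hi]; exact hd i
  have he1 : Real.exp (-2 * dmax) ≤ 1 := by
    rw [Real.exp_le_one_iff]; nlinarith
  refine ⟨hBu, fun t ht => ?_⟩
  have htp : (0:ℝ) < t + 1 := by linarith
  have hGfac : ((t/(t+1) : ℝ) : ℂ) • ((B + 1) * (B - 1)⁻¹) + ((1/(t+1) : ℝ) : ℂ) • 1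
      = cplx (-(Omega m * S * Omega m))
        * (((t/(t+1) : ℝ) : ℂ) • Fmat d + ((1/(t+1) : ℝ) : ℂ) • 1) * cplx Sᵀ := by
    rw [hMfull, Matrix.mul_add, Matrix.add_mul, mul_smul_comm, smul_mul_assoc,
      mul_smul_comm, smul_mul_assoc, mul_one, hqpc]
  -- lower bound for the middle factor
  have hG'q : ∀ z : EuclideanSpace ℂ (Idx m),
      Real.exp (-2 * dmax) * ‖z‖ ^ 2 ≤ (inner ℂ z (Matrix.toEuclideanLin
        (((t/(t+1) : ℝ) : ℂ) • Fmat d + ((1/(t+1) : ℝ) : ℂ) • 1) z) : ℂ).re := by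
    intro z
    have happ : Matrix.toEuclideanLin
        (((t/(t+1) : ℝ) : ℂ) • Fmat d + ((1/(t+1) : ℝ) : ℂ) • 1) z
        = ((t/(t+1) : ℝ) : ℂ) • Matrix.toEuclideanLin (Fmat d) z + ((1/(t+1) : ℝ) : ℂ) • z := by
      rw [map_add, _root_.map_smul, _root_.map_smul]
      simp only [LinearMap.add_apply, LinearMap.smul_apply]
      rw [toEL_one_apply]
    rw [happ, inner_add_right, inner_smul_right, inner_smul_right, Complex.add_re,
      Complex.re_ofReal_mul, Complex.re_ofReal_mul]
    have hzz : (inner ℂ z z : ℂ).re = ‖z‖ ^ 2 := by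
      have h4 := inner_self_eq_norm_sq (𝕜 := ℂ) z
      simpa using h4
    rw [hzz]
    have hq := quad_bound d hd dmax hdmax_le z
    have hA : (0:ℝ) ≤ ‖z‖ ^ 2 := sq_nonneg _
    have step1 : Real.exp (-2*dmax) * ‖z‖ ^ 2
        ≤ t/(t+1) * (Real.exp (-2*dmax) * ‖z‖ ^ 2) + 1/(t+1) * ‖z‖ ^ 2 := by
      have expand : t/(t+1) * (Real.exp (-2*dmax) * ‖z‖ ^ 2) + 1/(t+1) * ‖z‖ ^ 2
          - Real.exp (-2*dmax) * ‖z‖ ^ 2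
          = (1 - Real.exp (-2*dmax)) * ‖z‖ ^ 2 / (t+1) := by
        field_simp; ring
      nlinarith [div_nonneg (mul_nonneg (sub_nonneg.mpr he1) hA) htp.le]
    refine le_trans step1 ?_
    have step2 : t/(t+1) * (Real.exp (-2*dmax) * ‖z‖ ^ 2)
        ≤ t/(t+1) * (inner ℂ z (Matrix.toEuclideanLin (Fmat d) z) : ℂ).re :=
      mul_le_mul_of_nonneg_left hq (by positivity)
    linarith
  have hG'n := quad_to_norm _ _ hG'q
  have hbound := sandwich_norm _ _ (cplx Sᵀ) (cplx (-(Omega m * S * Omega m))) ‖S‖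
    (Real.exp (-2 * dmax)) hGfac hqpc hpqc hcPn hcQn hSpos he hG'n
  refine ⟨?_, ?_⟩
  · exact isUnit_of_lower_bound _ _ (by positivity) hbound
  · intro x
    have := hbound x
    rwa [spNorm_eq]
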